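/- For every composition s = (s(1),…,s(a)) with a ≥ 1, the number of s-Dyck paths equals the determinant of the (a−1)×(a−1) matrix whose (i,j) entry is the binomial coefficient C(λ_j + 1, j − i + 1), where λ_j = Σ_{i'=1}^{a−j}(s(i')−1) for j ∈ [a−1] (with the convention C(n,k) = 0 when k < 0, and the determinant of the empty matrix equal to 1). -/

import Mathlib

/-- `μ` encodes an `s`-Dyck path: it has length `a = ℓ(s)`, sum `|s| - a`, and its
partial sums are bounded by those of `s - 𝟏`. -/
def IsDyck (s μ : List ℕ) : Prop :=
  μ.length = s.length ∧ μ.sum + s.length = s.sum ∧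
    ∀ i ≤ s.length, (μ.take i).sum ≤ ((s.take i).map (fun x => x - 1)).sum


open Matrix


def Hm (n : ℕ) (f : ℕ → ℕ) : Matrix (Fin n) (Fin n) ℤ :=
  fun i j => if (j : ℕ) ≤ (i : ℕ) + 1 then ((f j + 1).choose ((i : ℕ) + 1 - j) : ℤ) else 0

lemma Hm_congr (n : ℕ) (f g : ℕ → ℕ) (h : ∀ j < n, f j = g j) : Hm n f = Hm n g := by
  funext i j
  simp only [Hm, h j j.isLt]

def Dt (L : List ℕ) : ℤ := (Hm L.length (fun j => L.getD j 0)).det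

lemma Dt_nil : Dt [] = 1 := by
  simp [Dt, Matrix.det_isEmpty]

-- unit column determinant: matrix over Fin (n+1) whose last column is `Pi.single last 1`
lemma det_lastcol_single (n : ℕ) (M : Matrix (Fin (n+1)) (Fin (n+1)) ℤ)
    (h : ∀ i, M i (Fin.last n) = if i = Fin.last n then 1 else 0) :
    M.det = (M.submatrix Fin.castSucc Fin.castSucc).det := by
  rw [Matrix.det_succ_column M (Fin.last n)]
  rw [Finset.sum_eq_single (Fin.last n)]
  · rw [h]
    simp [Fin.succAbove_last]
  · intro i _ hi
    rw [h, if_neg hi]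
    ring
  · simp

lemma HB (n : ℕ) (f : ℕ → ℕ) (t : ℕ) (ht : 1 ≤ t) (hf : f n = t) :
    (Hm (n+1) f).det =
      (Hm (n+1) (Function.update f n (t-1))).det + (Hm n f).det := by
  set f' := Function.update f n (t-1) with hf'
  have key : Hm (n+1) f = (Hm (n+1) f').updateCol (Fin.last n)
      ((fun i => Hm (n+1) f' i (Fin.last n)) + (fun i => if i = Fin.last n then 1 else 0)) := by
    funext i j
    by_cases hj : j = Fin.last n
    · subst hj
      rw [Matrix.updateCol_self, Pi.add_apply]
      have hi : (i = Fin.last n) ↔ ((i:ℕ) = n) := by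
        rw [Fin.ext_iff]; simp
      simp only [Hm, Fin.val_last, hf', Function.update_self, hf]
      rcases lt_trichotomy ((i:ℕ)+1) n with h1 | h1 | h1
      · rw [if_neg (by omega), if_neg (by omega), if_neg (by rw [hi]; omega)]
        simp
      · rw [if_pos (by omega), if_pos (by omega)]
        have : (i:ℕ) + 1 - n = 0 := by omega
        rw [this, if_neg (by simp [hi]; omega)]
        simp [Nat.choose_zero_right]
      · have hin : (i:ℕ) = n := by omega
        rw [if_pos (by omega), if_pos (by omega)]
        have h2 : (i:ℕ) + 1 - n = 1 := by omega
        rw [h2, if_pos (by simp [hi, hin])]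
        rw [Nat.choose_one_right, Nat.choose_one_right]
        push_cast [Nat.sub_add_cancel ht]
        ring
    · rw [Matrix.updateCol_ne hj]
      simp only [Hm, hf']
      have hne : (j : ℕ) ≠ n := fun hc => hj (Fin.ext hc)
      rw [Function.update_of_ne hne]
  rw [key, Matrix.det_updateCol_add]
  congr 1
  · rw [Matrix.updateCol_eq_self]
  · rw [det_lastcol_single]
    · congr 1
      funext i j
      have hj : Fin.castSucc j ≠ Fin.last n := (Fin.castSucc_lt_last j).ne
      rw [Matrix.submatrix_apply, Matrix.updateCol_ne hj]
      simp only [Hm, Fin.coe_castSucc, hf']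
      rw [Function.update_of_ne (by omega : (j:ℕ) ≠ n)]
    · intro i
      rw [Matrix.updateCol_self]

lemma HA (n : ℕ) (f : ℕ → ℕ) (j t : ℕ) (hjn : j + 1 < n) (ht : 1 ≤ t)
    (hfj : f j = t) (hfj1 : f (j+1) = t - 1) :
    (Hm n f).det = (Hm n (Function.update f j (t-1))).det := by
  set f' := Function.update f j (t-1) with hf'
  have hjn' : j < n := by omega
  have hcol1 : ∀ i : Fin n, Hm n f' i ⟨j+1, hjn⟩
      = if j + 1 ≤ (i:ℕ) + 1 then ((t.choose ((i:ℕ) - j)) : ℤ) else 0 := by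
    intro i
    show (if j + 1 ≤ (i:ℕ) + 1 then ((f' (j+1) + 1).choose ((i:ℕ) + 1 - (j+1)) : ℤ) else 0) = _
    rw [hf', Function.update_of_ne (by omega : j + 1 ≠ j), hfj1]
    have h1 : t - 1 + 1 = t := by omega
    have h2 : (i:ℕ) + 1 - (j+1) = (i:ℕ) - j := by omega
    rw [h1, h2]
  have key : Hm n f = (Hm n f').updateCol ⟨j, hjn'⟩
      ((fun i => Hm n f' i ⟨j, hjn'⟩) + (fun i => Hm n f' i ⟨j+1, hjn⟩)) := by
    funext i k
    by_cases hk : k = (⟨j, hjn'⟩ : Fin n)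
    · subst hk
      rw [Matrix.updateCol_self, Pi.add_apply, hcol1]
      show (if j ≤ (i:ℕ) + 1 then ((f j + 1).choose ((i:ℕ) + 1 - j) : ℤ) else 0)
        = (if j ≤ (i:ℕ) + 1 then ((f' j + 1).choose ((i:ℕ) + 1 - j) : ℤ) else 0) + _
      rw [hfj, hf', Function.update_self]
      have h1 : t - 1 + 1 = t := by omega
      rw [h1]
      rcases lt_trichotomy ((i:ℕ)+1) j with h2 | h2 | h2
      · rw [if_neg (by omega), if_neg (by omega), if_neg (by omega)]
        simp
      · rw [if_pos (by omega), if_pos (by omega), if_neg (by omega)]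
        have h3 : (i:ℕ) + 1 - j = 0 := by omega
        rw [h3]
        simp
      · rw [if_pos (by omega), if_pos (by omega), if_pos (by omega)]
        have h3 : (i:ℕ) + 1 - j = ((i:ℕ) - j) + 1 := by omega
        rw [h3, Nat.choose_succ_succ]
        push_cast
        ring
    · rw [Matrix.updateCol_ne hk]
      show (if (k:ℕ) ≤ (i:ℕ) + 1 then ((f k + 1).choose ((i:ℕ) + 1 - k) : ℤ) else 0) = _
      have hne : (k : ℕ) ≠ j := fun hc => hk (Fin.ext hc)
      rw [show Hm n f' i k = (if (k:ℕ) ≤ (i:ℕ) + 1 then ((f' (k:ℕ) + 1).choose ((i:ℕ) + 1 - k) : ℤ) else 0) from rfl,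
        hf', Function.update_of_ne hne]
  rw [key, Matrix.det_updateCol_add]
  have h0 : ((Hm n f').updateCol ⟨j, hjn'⟩ (fun i => Hm n f' i ⟨j+1, hjn⟩)).det = 0 := by
    apply Matrix.det_zero_of_column_eq
      (show (⟨j, hjn'⟩ : Fin n) ≠ ⟨j+1, hjn⟩ by simp [Fin.ext_iff])
    intro k
    rw [Matrix.updateCol_self,
      Matrix.updateCol_ne (show (⟨j+1, hjn⟩ : Fin n) ≠ ⟨j, hjn'⟩ by simp [Fin.ext_iff])]
  rw [h0, add_zero, Matrix.updateCol_eq_self]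

lemma H0 (n : ℕ) (f : ℕ → ℕ) (h : ∀ j < n, f j = 0) : (Hm n f).det = 1 := by
  rw [Matrix.det_of_upperTriangular]
  · rw [Finset.prod_eq_one]
    intro i _
    simp only [Hm, if_pos (by omega : (i:ℕ) ≤ (i:ℕ)+1), h i i.isLt]
    have h2 : (i:ℕ) + 1 - (i:ℕ) = 1 := by omega
    rw [h2]
    norm_num
  · intro i j hij
    have hij' : (j:ℕ) < (i:ℕ) := hij
    simp only [Hm, h j (j.isLt)]
    rw [if_pos (by omega)]
    have h2 : (i:ℕ) + 1 - (j:ℕ) = ((i:ℕ) - (j:ℕ) - 1) + 2 := by omega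
    rw [h2, Nat.choose_eq_zero_of_lt (by omega)]
    simp

lemma Dt_eq (L : List ℕ) (n : ℕ) (h : L.length = n) :
    Dt L = (Hm n (fun j => L.getD j 0)).det := by subst h; rfl

lemma Dt_replicate_zero (n : ℕ) : Dt (List.replicate n 0) = 1 := by
  rw [Dt_eq _ n (List.length_replicate)]
  apply H0
  intro j hj
  rw [List.getD_eq_getElem _ _ (by simpa using hj)]
  simp

lemma DtB (L : List ℕ) (t : ℕ) (ht : 1 ≤ t) :
    Dt (L ++ [t]) = Dt (L ++ [t-1]) + Dt L := by
  set n := L.length with hn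
  rw [Dt_eq (L ++ [t]) (n+1) (by simp [hn]), Dt_eq (L ++ [t-1]) (n+1) (by simp [hn]), Dt_eq L n rfl]
  rw [HB n _ t ht (by rw [List.getD_append_right _ _ _ _ (le_refl n)]; simp [hn])]
  congr 1
  · congr 1
    apply Hm_congr
    intro j hj
    rcases Nat.lt_or_ge j n with h | h
    · rw [Function.update_of_ne (by omega), List.getD_append _ _ _ _ h,
        List.getD_append _ _ _ _ h]
    · have hj' : j = n := by omega
      subst hj'
      rw [Function.update_self, List.getD_append_right _ _ _ _ (le_refl _)]
      simp
  · apply congrArg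
    apply Hm_congr
    intro j hj
    rw [List.getD_append _ _ _ _ hj]

lemma DtA (X Y : List ℕ) (t : ℕ) (ht : 1 ≤ t) :
    Dt (X ++ t :: (t-1) :: Y) = Dt (X ++ (t-1) :: (t-1) :: Y) := by
  set n := X.length + 2 + Y.length with hn
  have hl1 : (X ++ t :: (t-1) :: Y).length = n := by simp [hn]; omega
  have hl2 : (X ++ (t-1) :: (t-1) :: Y).length = n := by simp [hn]; omega
  rw [Dt_eq _ n hl1, Dt_eq _ n hl2]
  rw [HA n _ X.length t (by omega) ht
    (by rw [List.getD_append_right _ _ _ _ (le_refl _)]; simp)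
    (by rw [List.getD_append_right _ _ _ _ (by omega)]
        have : X.length + 1 - X.length = 1 := by omega
        rw [this]; simp)]
  apply congrArg
  apply Hm_congr
  intro j hj
  rcases Nat.lt_or_ge j X.length with h | h
  · rw [Function.update_of_ne (by omega), List.getD_append _ _ _ _ h,
      List.getD_append _ _ _ _ h]
  · rcases Nat.lt_or_ge j (X.length + 1) with h2 | h2
    · have hj' : j = X.length := by omega
      subst hj'
      rw [Function.update_self, List.getD_append_right _ _ _ _ (le_refl _)]
      simp
    · rw [Function.update_of_ne (by omega), List.getD_append_right _ _ _ _ h,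
        List.getD_append_right _ _ _ _ h]
      have : j - X.length = (j - X.length - 1) + 1 := by omega
      rw [this]
      simp

lemma Dt_fix (t : ℕ) (ht : 1 ≤ t) : ∀ (k : ℕ) (X Y : List ℕ),
    Dt (X ++ List.replicate k t ++ (t-1) :: Y) = Dt (X ++ List.replicate k (t-1) ++ (t-1) :: Y) := by
  intro k
  induction k with
  | zero => intro X Y; simp
  | succ k ih =>
    intro X Y
    have e1 : X ++ List.replicate (k+1) t ++ (t-1) :: Y
        = (X ++ List.replicate k t) ++ t :: (t-1) :: Y := by
      rw [List.replicate_succ']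
      simp [List.append_assoc]
    have e2 : (X ++ List.replicate k t) ++ (t-1) :: (t-1) :: Y
        = X ++ List.replicate k t ++ (t-1) :: ((t-1) :: Y) := by
      simp [List.append_assoc]
    have e3 : X ++ List.replicate k (t-1) ++ (t-1) :: ((t-1) :: Y)
        = X ++ List.replicate (k+1) (t-1) ++ (t-1) :: Y := by
      rw [List.replicate_succ']
      simp [List.append_assoc]
    rw [e1, DtA _ _ t ht, e2, ih, e3]


def dch : List ℕ → Finset (List ℕ)
  | [] => {[]}
  | t :: R => (dch R).biUnion (fun q => (Finset.Icc (q.headD 0) t).image (fun r => r :: q))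

def Ok (R p : List ℕ) : Prop := List.Forall₂ (· ≤ ·) p R ∧ List.Chain' (· ≥ ·) p

lemma headD_le_iff (q : List ℕ) (r : ℕ) : q.headD 0 ≤ r ↔ ∀ b ∈ q.head?, b ≤ r := by
  cases q <;> simp

lemma mem_dch {R p : List ℕ} : p ∈ dch R ↔ Ok R p := by
  induction R generalizing p with
  | nil =>
    simp [dch, Ok, List.forall₂_nil_right_iff]
    intro h; subst h; exact List.isChain_nil
  | cons t R ih =>
    simp only [dch, Finset.mem_biUnion, Finset.mem_image, Finset.mem_Icc, Ok]
    constructor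
    · rintro ⟨q, hq, r, ⟨hr1, hr2⟩, rfl⟩
      rcases ih.mp hq with ⟨hf, hc⟩
      exact ⟨List.Forall₂.cons hr2 hf,
        List.isChain_cons.mpr ⟨fun b hb => (headD_le_iff q r).mp hr1 b hb, hc⟩⟩
    · rintro ⟨hf, hc⟩
      rcases List.forall₂_cons_right_iff.mp hf with ⟨r, q, hrt, hq, rfl⟩
      refine ⟨q, ih.mpr ⟨hq, (List.isChain_cons.mp hc).2⟩, r,
        ⟨(headD_le_iff q r).mpr ?_, hrt⟩, rfl⟩
      intro b hb
      exact (List.isChain_cons.mp hc).1 b hb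

def cnt (R : List ℕ) : ℕ := (dch R).card

lemma cnt_nil : cnt [] = 1 := by simp [cnt, dch]

lemma head_le_of_forall₂ {q R : List ℕ} {t : ℕ} (hq : List.Forall₂ (· ≤ ·) q R)
    (hR : ∀ x ∈ R, x ≤ t) : ∀ b ∈ q.head?, b ≤ t := by
  cases hq with
  | nil => simp
  | cons h hs =>
    simp only [List.head?_cons, Option.mem_some_iff]
    rintro b rfl
    exact le_trans h (hR _ (List.mem_cons_self))

lemma cnt_step {R : List ℕ} {t : ℕ} (ht : 1 ≤ t) (hR : ∀ x ∈ R, x ≤ t) :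
    cnt (t :: R) = cnt ((t-1) :: R) + cnt R := by
  have hset : dch (t :: R) = dch ((t-1) :: R) ∪ (dch R).image (fun q => t :: q) := by
    ext p
    simp only [Finset.mem_union, Finset.mem_image, mem_dch, Ok]
    constructor
    · rintro ⟨hf, hc⟩
      rcases List.forall₂_cons_right_iff.mp hf with ⟨r, q, hrt, hq, rfl⟩
      rcases Nat.lt_or_ge r t with h | h
      · exact Or.inl ⟨List.Forall₂.cons (by omega) hq, hc⟩
      · have : r = t := by omega
        subst this
        exact Or.inr ⟨q, ⟨hq, (List.isChain_cons.mp hc).2⟩, rfl⟩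
    · rintro (⟨hf, hc⟩ | ⟨q, ⟨hq, hcq⟩, rfl⟩)
      · rcases List.forall₂_cons_right_iff.mp hf with ⟨r, q, hrt, hq, rfl⟩
        exact ⟨List.Forall₂.cons (by omega) hq, hc⟩
      · exact ⟨List.Forall₂.cons (le_refl t) hq,
          List.isChain_cons.mpr ⟨head_le_of_forall₂ hq hR, hcq⟩⟩
  have hdisj : Disjoint (dch ((t-1) :: R)) ((dch R).image (fun q => t :: q)) := by
    rw [Finset.disjoint_left]
    intro p hp1 hp2
    rcases Finset.mem_image.mp hp2 with ⟨q, _, rfl⟩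
    rcases (mem_dch.mp hp1) with ⟨hf, _⟩
    rcases List.forall₂_cons_right_iff.mp hf with ⟨r, q', hrt, _, heq⟩
    have : r = t := by
      have := congrArg (fun l => List.headD l 0) heq
      simpa using this.symm
    omega
  rw [cnt, hset, Finset.card_union_of_disjoint hdisj,
    Finset.card_image_of_injective _ (fun a b h => by simpa using h)]
  rfl

-- clamping below a head
lemma forall₂_min_iff {q R : List ℕ} {a : ℕ} (hq : ∀ x ∈ q, x ≤ a) :
    List.Forall₂ (· ≤ ·) q R ↔ List.Forall₂ (· ≤ ·) q (R.map (fun x => min x a)) := by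
  induction q generalizing R with
  | nil =>
    constructor
    · rintro h; rcases List.forall₂_nil_left_iff.mp h with rfl; simp
    · rintro h
      rcases List.forall₂_nil_left_iff.mp h with h'
      have : R = [] := by
        cases R with
        | nil => rfl
        | cons x R => simp at h'
      subst this; exact List.Forall₂.nil
  | cons x q ih =>
    cases R with
    | nil => simp [List.forall₂_nil_right_iff]
    | cons y R =>
      simp only [List.map_cons, List.forall₂_cons]
      constructor
      · rintro ⟨h1, h2⟩
        exact ⟨le_min h1 (hq x (List.mem_cons_self)),
          (ih (fun z hz => hq z (List.mem_cons_of_mem _ hz))).mp h2⟩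
      · rintro ⟨h1, h2⟩
        exact ⟨le_trans h1 (min_le_left _ _),
          (ih (fun z hz => hq z (List.mem_cons_of_mem _ hz))).mpr h2⟩

lemma dch_head_clamp (a : ℕ) (R : List ℕ) :
    dch (a :: R) = dch (a :: R.map (fun x => min x a)) := by
  ext p
  simp only [mem_dch, Ok]
  constructor
  · rintro ⟨hf, hc⟩
    rcases List.forall₂_cons_right_iff.mp hf with ⟨r, q, hra, hq, rfl⟩
    have hqa : ∀ x ∈ q, x ≤ a := by
      intro x hx
      have hp : List.Pairwise (· ≥ ·) (r :: q) := List.isChain_iff_pairwise.mp hc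
      exact le_trans (List.rel_of_pairwise_cons hp hx) hra
    exact ⟨List.Forall₂.cons hra ((forall₂_min_iff hqa).mp hq), hc⟩
  · rintro ⟨hf, hc⟩
    rcases List.forall₂_cons_right_iff.mp hf with ⟨r, q, hra, hq, rfl⟩
    have hqa : ∀ x ∈ q, x ≤ a := by
      intro x hx
      have hp : List.Pairwise (· ≥ ·) (r :: q) := List.isChain_iff_pairwise.mp hc
      exact le_trans (List.rel_of_pairwise_cons hp hx) hra
    exact ⟨List.Forall₂.cons hra ((forall₂_min_iff hqa).mpr hq), hc⟩

lemma forall₂_replicate_zero {p : List ℕ} {m : ℕ}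
    (h : List.Forall₂ (· ≤ ·) p (List.replicate m 0)) : p = List.replicate m 0 := by
  induction p generalizing m with
  | nil =>
    have := List.forall₂_nil_left_iff.mp h
    cases m with
    | zero => rfl
    | succ m => simp [List.replicate_succ] at this
  | cons x q ih =>
    cases m with
    | zero => simp [List.forall₂_nil_right_iff] at h
    | succ m =>
      rw [List.replicate_succ] at h ⊢
      rcases List.forall₂_cons.mp h with ⟨h1, h2⟩
      have : x = 0 := by omega
      rw [this, ih h2]

lemma cnt_zeros (m : ℕ) : cnt (List.replicate m 0) = 1 := by
  have : dch (List.replicate m 0) = {List.replicate m 0} := by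
    ext p
    simp only [mem_dch, Ok, Finset.mem_singleton]
    constructor
    · rintro ⟨hf, _⟩
      exact forall₂_replicate_zero hf
    · rintro rfl
      constructor
      · induction m with
        | zero => exact List.Forall₂.nil
        | succ m ih => simpa [List.replicate_succ] using List.Forall₂.cons (le_refl 0) ih
      · exact List.isChain_iff_pairwise.mpr
          (List.pairwise_replicate.mpr (Or.inr (le_refl 0)))
  simp [cnt, this]

lemma cnt_head_clamp (a : ℕ) (R : List ℕ) :
    cnt (a :: R) = cnt (a :: R.map (fun x => min x a)) := by
  unfold cnt
  rw [dch_head_clamp]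

lemma decompose : ∀ (R : List ℕ), List.Chain' (· ≥ ·) R → ∀ t, (∀ x ∈ R, x ≤ t) →
    ∃ k Q, R = List.replicate k t ++ Q ∧ List.Chain' (· ≥ ·) Q ∧ ∀ x ∈ Q, x < t := by
  intro R
  induction R with
  | nil => exact fun _ t _ => ⟨0, [], by simp, List.isChain_nil, by simp⟩
  | cons x R' ih =>
    intro hch t hb
    by_cases hx : x = t
    · subst hx
      obtain ⟨k, Q, h1, h2, h3⟩ := ih hch.tail x (fun y hy => hb y (List.mem_cons_of_mem _ hy))
      exact ⟨k+1, Q, by rw [List.replicate_succ, h1]; rfl, h2, h3⟩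
    · refine ⟨0, x :: R', by simp, hch, ?_⟩
      intro y hy
      have hxt : x < t := lt_of_le_of_ne (hb x (List.mem_cons_self)) hx
      rcases List.mem_cons.mp hy with rfl | hy'
      · exact hxt
      · have hpw := List.isChain_iff_pairwise.mp hch
        exact lt_of_le_of_lt (List.rel_of_pairwise_cons hpw hy') hxt

lemma sum_map_min_le (R : List ℕ) (a : ℕ) : (R.map (fun x => min x a)).sum ≤ R.sum := by
  induction R with
  | nil => simp
  | cons x R ih =>
    simp only [List.map_cons, List.sum_cons]
    have : min x a ≤ x := min_le_left _ _
    omega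

lemma map_min_decomp {R' Q : List ℕ} {k t : ℕ} (ht : 1 ≤ t)
    (hdec : R' = List.replicate k t ++ Q) (hQ : ∀ x ∈ Q, x < t) :
    R'.map (fun x => min x (t-1)) = List.replicate k (t-1) ++ Q := by
  subst hdec
  rw [List.map_append, List.map_replicate]
  congr 1
  · congr 1
    omega
  · calc Q.map (fun x => min x (t-1)) = Q.map id := by
          apply List.map_congr_left
          intro x hx
          have := hQ x hx
          simp only [id_eq]
          omega
    _ = Q := List.map_id Q

theorem cnt_eq_Dt : ∀ (N : ℕ) (R : List ℕ), R.sum + R.length ≤ N → List.Chain' (· ≥ ·) R →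
    (cnt R : ℤ) = Dt R.reverse := by
  intro N
  induction N with
  | zero =>
    intro R hR _
    have : R = [] := by
      cases R with
      | nil => rfl
      | cons x R' => simp at hR
    subst this
    simp [cnt_nil, Dt_nil]
  | succ N ih =>
    intro R hR hch
    cases R with
    | nil => simp [cnt_nil, Dt_nil]
    | cons t R' =>
      have hbound : ∀ x ∈ R', x ≤ t := by
        intro x hx
        exact List.rel_of_pairwise_cons (List.isChain_iff_pairwise.mp hch) hx
      by_cases ht : t = 0
      · subst ht
        have hrep : (0 : ℕ) :: R' = List.replicate (R'.length + 1) 0 := by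
          have : ∀ x ∈ (0 : ℕ) :: R', x = 0 := by
            intro x hx
            rcases List.mem_cons.mp hx with rfl | hx'
            · rfl
            · exact Nat.le_zero.mp (hbound x hx')
          have h2 := List.eq_replicate_of_mem this
          simpa using h2
        rw [hrep, cnt_zeros, List.reverse_replicate, Dt_replicate_zero]
        norm_num
      · have ht1 : 1 ≤ t := by omega
        obtain ⟨k, Q, hdec, hchQ, hQlt⟩ := decompose R' hch.tail t hbound
        have hmap : R'.map (fun x => min x (t-1)) = List.replicate k (t-1) ++ Q :=
          map_min_decomp ht1 hdec hQlt
        set R'' : List ℕ := (t-1) :: (List.replicate k (t-1) ++ Q) with hR''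
        -- cnt chain
        have hcnt1 : cnt (t :: R') = cnt R'' + cnt R' := by
          rw [cnt_step ht1 hbound, cnt_head_clamp, hmap]
        -- chain' of R''
        have hchR'' : List.Chain' (· ≥ ·) R'' := by
          rw [hR'', ← hmap]
          apply List.isChain_cons.mpr
          constructor
          · intro y hy
            rw [List.head?_map] at hy
            rcases Option.map_eq_some_iff.mp hy with ⟨z, _, rfl⟩
            exact min_le_right _ _
          · rw [List.isChain_map]
            apply List.IsChain.imp ?_ hch.tail
            intro a b hab
            exact min_le_min hab (le_refl _)
        -- bounds for IH
        have hsum'' : R''.sum + R''.length ≤ N := by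
          have h1 : R''.sum = (t-1) + (R'.map (fun x => min x (t-1))).sum := by
            rw [hR'', ← hmap]; simp
          have h2 : R''.length = 1 + R'.length := by
            rw [hR'', ← hmap]; simp; omega
          have h3 := sum_map_min_le R' (t-1)
          have h4 : (t :: R').sum = t + R'.sum := by simp
          have h5 : (t :: R').length = R'.length + 1 := by simp
          omega
        have hsum' : R'.sum + R'.length ≤ N := by
          have h4 : (t :: R').sum = t + R'.sum := by simp
          have h5 : (t :: R').length = R'.length + 1 := by simp
          omega
        have ih1 := ih R'' hsum'' hchR''
        have ih2 := ih R' hsum' hch.tail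
        -- Dt chain
        have hDt1 : Dt ((t :: R').reverse) = Dt (R''.reverse) + Dt (R'.reverse) := by
          have e1 : R'.reverse ++ [t-1] = Q.reverse ++ List.replicate k t ++ ((t-1) :: []) := by
            rw [hdec]
            simp [List.reverse_append, List.reverse_replicate, List.append_assoc]
          have e2 : R''.reverse = Q.reverse ++ List.replicate k (t-1) ++ ((t-1) :: []) := by
            rw [hR'']
            simp [List.reverse_append, List.reverse_replicate, List.append_assoc]
          rw [List.reverse_cons, DtB _ t ht1, e1, Dt_fix t ht1 k _ _, ← e2]
        rw [hDt1, ← ih1, ← ih2, hcnt1]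
        push_cast
        ring


def Tsum (s : List ℕ) (i : ℕ) : ℕ := ((s.take i).map (fun x => x - 1)).sum

def Torig (s : List ℕ) : List ℕ := (List.range (s.length - 1)).map (fun i => Tsum s (i+1))

def Rmain (s : List ℕ) : List ℕ :=
  (List.range (s.length - 1)).map (fun j => Tsum s (s.length - 1 - j))

def psf (s q : List ℕ) (i : ℕ) : ℕ :=
  if i = 0 then 0 else if i ≤ s.length - 1 then q.getD (i-1) 0 else Tsum s s.length

def toMu (s q : List ℕ) : List ℕ :=
  (List.range s.length).map (fun i => psf s q (i+1) - psf s q i)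

def toQ (s μ : List ℕ) : List ℕ :=
  (List.range (s.length - 1)).map (fun i => (μ.take (i+1)).sum)

def OkQ (s q : List ℕ) : Prop :=
  List.Forall₂ (· ≤ ·) q (Torig s) ∧ List.Chain' (· ≤ ·) q

lemma sum_take_le (l : List ℕ) (i : ℕ) : (l.take i).sum ≤ l.sum := by
  conv_rhs => rw [← List.take_append_drop i l]
  rw [List.sum_append]
  omega

lemma sum_take_mono (l : List ℕ) {i j : ℕ} (h : i ≤ j) :
    (l.take i).sum ≤ (l.take j).sum := by
  have h1 : (l.take j).take i = l.take i := by
    rw [List.take_take, min_eq_left h]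
  rw [← h1]
  exact sum_take_le _ _

lemma Tsum_mono (s : List ℕ) {i j : ℕ} (h : i ≤ j) : Tsum s i ≤ Tsum s j := by
  unfold Tsum
  rw [List.map_take, List.map_take]
  exact sum_take_mono _ h

lemma Tsum_total (s : List ℕ) (hs : ∀ x ∈ s, 0 < x) : Tsum s s.length + s.length = s.sum := by
  unfold Tsum
  rw [List.take_length]
  induction s with
  | nil => simp
  | cons x s ih =>
    simp only [List.map_cons, List.sum_cons, List.length_cons]
    have hx := hs x (List.mem_cons_self)
    have := ih (fun y hy => hs y (List.mem_cons_of_mem _ hy))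
    omega

lemma Torig_length (s : List ℕ) : (Torig s).length = s.length - 1 := by simp [Torig]

lemma Torig_getElem (s : List ℕ) (i : ℕ) (h : i < s.length - 1) :
    (Torig s)[i]'(by rw [Torig_length]; exact h) = Tsum s (i+1) := by
  simp [Torig]

lemma OkQ_length {s q : List ℕ} (h : OkQ s q) : q.length = s.length - 1 := by
  have := h.1.length_eq
  simpa [Torig] using this

lemma OkQ_bound {s q : List ℕ} (h : OkQ s q) :
    ∀ i, i < s.length - 1 → q.getD i 0 ≤ Tsum s (i+1) := by
  intro i hi
  rcases List.forall₂_iff_get.mp h.1 with ⟨hl, hg⟩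
  have hq : i < q.length := by rw [OkQ_length h]; exact hi
  rw [List.getD_eq_getElem _ _ hq]
  have := hg i hq (by rw [Torig_length]; exact hi)
  simpa [List.get_eq_getElem, Torig_getElem s i hi] using this

lemma OkQ_mono {s q : List ℕ} (h : OkQ s q) :
    ∀ i, i + 1 < s.length - 1 → q.getD i 0 ≤ q.getD (i+1) 0 := by
  intro i hi
  have hl : q.length = s.length - 1 := OkQ_length h
  have h1 : i < q.length := by omega
  have h2 : i + 1 < q.length := by omega
  rw [List.getD_eq_getElem _ _ h1, List.getD_eq_getElem _ _ h2]
  have := List.isChain_iff_getElem.mp h.2 i (by omega)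
  simpa [List.get_eq_getElem] using this

lemma psf_zero (s q : List ℕ) : psf s q 0 = 0 := by simp [psf]

lemma psf_mid (s q : List ℕ) {i : ℕ} (h1 : 1 ≤ i) (h2 : i ≤ s.length - 1) :
    psf s q i = q.getD (i-1) 0 := by
  unfold psf
  rw [if_neg (by omega), if_pos h2]

lemma psf_top (s q : List ℕ) {i : ℕ} (h1 : 1 ≤ i) (h2 : ¬ (i ≤ s.length - 1)) :
    psf s q i = Tsum s s.length := by
  unfold psf
  rw [if_neg (by omega), if_neg h2]

lemma psf_mono_succ {s q : List ℕ} (h : OkQ s q) (ha : 1 ≤ s.length) :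
    ∀ i, i < s.length → psf s q i ≤ psf s q (i+1) := by
  intro i hi
  rcases Nat.eq_zero_or_pos i with rfl | hipos
  · rw [psf_zero]; omega
  have h1 : i ≤ s.length - 1 := by omega
  rw [psf_mid s q (by omega) h1]
  by_cases h2 : i + 1 ≤ s.length - 1
  · rw [psf_mid s q (by omega) h2]
    have := OkQ_mono h (i-1) (by omega)
    have e1 : i - 1 + 1 = i := by omega
    rw [e1] at this
    have e2 : i + 1 - 1 = i := by omega
    rw [e2]
    exact this
  · rw [psf_top s q (by omega) h2]
    calc q.getD (i-1) 0 ≤ Tsum s (i-1+1) := OkQ_bound h (i-1) (by omega)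
      _ ≤ Tsum s s.length := Tsum_mono s (by omega)

lemma toMu_length (s q : List ℕ) : (toMu s q).length = s.length := by simp [toMu]

lemma sum_take_toMu {s q : List ℕ} (h : OkQ s q) (ha : 1 ≤ s.length) :
    ∀ i, i ≤ s.length → ((toMu s q).take i).sum = psf s q i := by
  intro i hi
  induction i with
  | zero => simp [psf]
  | succ i ih =>
    have hi' : i < s.length := by omega
    have hlen : i < (toMu s q).length := by rw [toMu_length]; exact hi'
    rw [List.sum_take_succ _ _ hlen, ih (by omega)]
    have hget : (toMu s q)[i] = psf s q (i+1) - psf s q i := by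
      simp [toMu]
    rw [hget]
    have := psf_mono_succ h ha i hi'
    omega

lemma toMu_isDyck {s q : List ℕ} (hs : ∀ x ∈ s, 0 < x) (ha : 1 ≤ s.length)
    (h : OkQ s q) : IsDyck s (toMu s q) := by
  have hsum : (toMu s q).sum = Tsum s s.length := by
    have h1 : (toMu s q).sum = ((toMu s q).take s.length).sum := by
      rw [List.take_of_length_le (by rw [toMu_length])]
    rw [h1, sum_take_toMu h ha s.length (le_refl _), psf_top s q ha (by omega)]
  refine ⟨toMu_length s q, ?_, ?_⟩
  · rw [hsum]
    exact Tsum_total s hs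
  · intro i hi
    rw [sum_take_toMu h ha i hi]
    show psf s q i ≤ Tsum s i
    rcases Nat.eq_zero_or_pos i with rfl | hipos
    · rw [psf_zero]; omega
    by_cases h1 : i ≤ s.length - 1
    · rw [psf_mid s q (by omega) h1]
      calc q.getD (i-1) 0 ≤ Tsum s (i-1+1) := OkQ_bound h (i-1) (by omega)
        _ ≤ Tsum s i := Tsum_mono s (by omega)
    · rw [psf_top s q (by omega) h1]
      exact Tsum_mono s (by omega)

lemma toQ_toMu {s q : List ℕ} (h : OkQ s q) (ha : 1 ≤ s.length) :
    toQ s (toMu s q) = q := by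
  apply List.ext_getElem
  · rw [OkQ_length h]; simp [toQ]
  · intro i h1 h2
    have hi : i < s.length - 1 := by simpa [toQ] using h1
    have hq : i < q.length := h2
    have e0 : (toQ s (toMu s q))[i]'h1 = ((toMu s q).take (i+1)).sum := by
      simp [toQ]
    rw [e0, sum_take_toMu h ha (i+1) (by omega), psf_mid s q (by omega) (by omega)]
    have e : i + 1 - 1 = i := by omega
    rw [e, List.getD_eq_getElem _ _ hq]


lemma toQ_length (s μ : List ℕ) : (toQ s μ).length = s.length - 1 := by simp [toQ]

lemma toQ_getElem (s μ : List ℕ) (i : ℕ) (h : i < s.length - 1) :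
    (toQ s μ)[i]'(by rw [toQ_length]; exact h) = (μ.take (i+1)).sum := by
  simp [toQ]

lemma toQ_OkQ {s μ : List ℕ} (ha : 1 ≤ s.length) (hd : IsDyck s μ) : OkQ s (toQ s μ) := by
  obtain ⟨hlen, hsum, hpre⟩ := hd
  constructor
  · apply List.forall₂_iff_get.mpr
    constructor
    · rw [toQ_length, Torig_length]
    · intro i h1 h2
      have hi : i < s.length - 1 := by rw [toQ_length] at h1; exact h1
      simp only [List.get_eq_getElem]
      rw [toQ_getElem s μ i hi, Torig_getElem s i hi]
      exact hpre (i+1) (by omega)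
  · apply List.isChain_iff_getElem.mpr
    intro i hlt
    have hi : i + 1 < s.length - 1 := by rw [toQ_length] at hlt; omega
    rw [toQ_getElem s μ i (by omega), toQ_getElem s μ (i+1) hi]
    have hμ : i + 1 < μ.length := by omega
    rw [List.sum_take_succ _ _ hμ]
    omega

lemma psf_toQ {s μ : List ℕ} (hs : ∀ x ∈ s, 0 < x) (ha : 1 ≤ s.length) (hd : IsDyck s μ) :
    ∀ j, j ≤ s.length → psf s (toQ s μ) j = (μ.take j).sum := by
  obtain ⟨hlen, hsum, hpre⟩ := hd
  intro j hj
  rcases Nat.eq_zero_or_pos j with rfl | hjpos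
  · rw [psf_zero]; simp
  by_cases h1 : j ≤ s.length - 1
  · rw [psf_mid s _ (by omega) h1]
    have hj1 : j - 1 < s.length - 1 := by omega
    rw [List.getD_eq_getElem _ _ (by rw [toQ_length]; exact hj1), toQ_getElem s μ (j-1) hj1]
    have e : j - 1 + 1 = j := by omega
    rw [e]
  · have hja : j = s.length := by omega
    subst hja
    rw [psf_top s _ (by omega) h1]
    have h2 : μ.take s.length = μ := by
      apply List.take_of_length_le
      omega
    rw [h2]
    have h3 := Tsum_total s hs
    omega

lemma toMu_toQ {s μ : List ℕ} (hs : ∀ x ∈ s, 0 < x) (ha : 1 ≤ s.length)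
    (hd : IsDyck s μ) : toMu s (toQ s μ) = μ := by
  apply List.ext_getElem
  · rw [toMu_length, hd.1]
  · intro i h1 h2
    have hi : i < s.length := by rw [toMu_length] at h1; exact h1
    have e0 : (toMu s (toQ s μ))[i]'h1 = psf s (toQ s μ) (i+1) - psf s (toQ s μ) i := by
      simp [toMu]
    rw [e0, psf_toQ hs ha hd (i+1) (by omega), psf_toQ hs ha hd i (by omega),
      List.sum_take_succ _ _ h2]
    omega


lemma Rmain_length (s : List ℕ) : (Rmain s).length = s.length - 1 := by simp [Rmain]

lemma Rmain_getElem (s : List ℕ) (i : ℕ) (h : i < s.length - 1) :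
    (Rmain s)[i]'(by rw [Rmain_length]; exact h) = Tsum s (s.length - 1 - i) := by
  simp [Rmain]

lemma Rmain_chain (s : List ℕ) : List.Chain' (· ≥ ·) (Rmain s) := by
  apply List.isChain_iff_getElem.mpr
  intro i hlt
  rw [Rmain_length] at hlt
  rw [Rmain_getElem s i (by omega), Rmain_getElem s (i+1) (by omega)]
  exact Tsum_mono s (by omega)

lemma Rmain_rev (s : List ℕ) : (Rmain s).reverse = Torig s := by
  apply List.ext_getElem
  · rw [List.length_reverse, Rmain_length, Torig_length]
  · intro i h1 h2
    have hi : i < s.length - 1 := by rw [Torig_length] at h2; exact h2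
    rw [List.getElem_reverse]
    rw [Torig_getElem s i hi]
    have hlen : (Rmain s).length - 1 - i < s.length - 1 := by
      rw [Rmain_length]; omega
    rw [Rmain_getElem s _ hlen]
    congr 1
    rw [Rmain_length]
    omega

lemma Ok_iff (s p : List ℕ) : Ok (Rmain s) p ↔ OkQ s p.reverse := by
  unfold Ok OkQ
  constructor
  · rintro ⟨hf, hc⟩
    constructor
    · rw [← Rmain_rev]
      exact List.forall₂_reverse_iff.mpr hf
    · exact List.isChain_reverse.mpr hc
  · rintro ⟨hf, hc⟩
    constructor
    · rw [← Rmain_rev] at hf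
      exact List.forall₂_reverse_iff.mp hf
    · exact List.isChain_reverse.mp hc

lemma card_dyck_eq_cnt (s : List ℕ) (hs : ∀ x ∈ s, 0 < x) (ha : 1 ≤ s.length) :
    Nat.card {μ : List ℕ // IsDyck s μ} = cnt (Rmain s) := by
  have e1 : {q : List ℕ // OkQ s q} ≃ {μ : List ℕ // IsDyck s μ} :=
    { toFun := fun q => ⟨toMu s q.1, toMu_isDyck hs ha q.2⟩
      invFun := fun μ => ⟨toQ s μ.1, toQ_OkQ ha μ.2⟩
      left_inv := fun q => Subtype.ext (toQ_toMu q.2 ha)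
      right_inv := fun μ => Subtype.ext (toMu_toQ hs ha μ.2) }
  have e2 : {p : List ℕ // Ok (Rmain s) p} ≃ {q : List ℕ // OkQ s q} :=
    { toFun := fun p => ⟨p.1.reverse, (Ok_iff s p.1).mp p.2⟩
      invFun := fun q => ⟨q.1.reverse, (Ok_iff s q.1.reverse).mpr
        (by rw [List.reverse_reverse]; exact q.2)⟩
      left_inv := fun p => Subtype.ext (List.reverse_reverse _)
      right_inv := fun q => Subtype.ext (List.reverse_reverse _) }
  have e3 : {p : List ℕ // p ∈ dch (Rmain s)} ≃ {p : List ℕ // Ok (Rmain s) p} :=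
    Equiv.subtypeEquivRight (fun p => mem_dch)
  rw [← Nat.card_congr e1, ← Nat.card_congr e2, ← Nat.card_congr e3]
  rw [Nat.card_eq_finsetCard]
  rfl

lemma Dt_Torig (s : List ℕ) (ha : 1 ≤ s.length) :
    Dt (Torig s) = Matrix.det (fun i j : Fin (s.length - 1) =>
      if (i : ℕ) ≤ (j : ℕ) + 1 then
        (Nat.choose (((s.take (s.length - ((j : ℕ) + 1))).map (fun x => x - 1)).sum + 1)
          ((j : ℕ) + 1 - (i : ℕ)) : ℤ)
      else 0) := by
  set n := s.length - 1 with hn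
  rw [Dt_eq (Torig s) n (Torig_length s)]
  rw [Hm_congr n _ (fun j => Tsum s (j+1)) ?hcg]
  case hcg =>
    intro j hj
    rw [List.getD_eq_getElem _ _ (by rw [Torig_length]; exact hj)]
    exact Torig_getElem s j hj
  have hmat : (fun i j : Fin n =>
      if (i : ℕ) ≤ (j : ℕ) + 1 then
        (Nat.choose (((s.take (s.length - ((j : ℕ) + 1))).map (fun x => x - 1)).sum + 1)
          ((j : ℕ) + 1 - (i : ℕ)) : ℤ)
      else 0)
      = (Hm n (fun j => Tsum s (j+1))).submatrix Fin.revPerm Fin.revPerm := by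
    funext i j
    have hvi : (i : ℕ) < n := i.isLt
    have hvj : (j : ℕ) < n := j.isLt
    simp only [Matrix.submatrix_apply, Hm, Fin.revPerm_apply, Fin.val_rev]
    by_cases hc : (i : ℕ) ≤ (j : ℕ) + 1
    · rw [if_pos hc, if_pos (by omega)]
      show ((Nat.choose (Tsum s (s.length - ((j:ℕ)+1)) + 1) ((j:ℕ)+1-(i:ℕ))) : ℤ) = _
      have e1 : n - ((j:ℕ) + 1) + 1 = s.length - ((j:ℕ)+1) := by omega
      have e2 : n - ((i:ℕ) + 1) + 1 - (n - ((j:ℕ) + 1)) = (j:ℕ) + 1 - (i:ℕ) := by omega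
      rw [e1, e2]
    · rw [if_neg hc, if_neg (by omega)]
  rw [hmat, Matrix.det_submatrix_equiv_self]

/-- The number of `s`-Dyck paths equals the determinant of the `(a-1) × (a-1)` matrix
with entries `C(λ_j + 1, j - i + 1)` where `λ_j = Σ_{i'=1}^{a-j} (s(i') - 1)`
(entries with `j - i + 1 < 0` are zero; the empty determinant is `1`). -/
theorem sCatalan_det (s : List ℕ) (hs : ∀ x ∈ s, 0 < x) (ha : 1 ≤ s.length) :
    (Nat.card {μ : List ℕ // IsDyck s μ} : ℤ) =
      Matrix.det (fun i j : Fin (s.length - 1) =>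
        if (i : ℕ) ≤ (j : ℕ) + 1 then
          (Nat.choose (((s.take (s.length - ((j : ℕ) + 1))).map (fun x => x - 1)).sum + 1)
            ((j : ℕ) + 1 - (i : ℕ)) : ℤ)
        else 0) := by
  rw [← Dt_Torig s ha, ← Rmain_rev s, card_dyck_eq_cnt s hs ha]
  exact cnt_eq_Dt ((Rmain s).sum + (Rmain s).length) (Rmain s) (le_refl _) (Rmain_chain s)
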